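/- arXiv:1404.4249 — 5 statements merged into one kernel-verified Lean document; each statement's English description precedes it below -/
import Mathlib

section
/- Let G be a bipartite graph whose bi-adjacency matrix is a Ferrers matrix (each row i consists of r_i ones followed by zeros), with row sums ordered r_1 ≥ r_2 ≥ … ≥ r_n. Then the number of perfect matchings of G equals r_n · (r_{n-1} − 1) · (r_{n-2} − 2) ⋯ (r_1 − (n−1)), i.e. ∏_{i=1}^{n} (r_{n+1-i} − (i−1)). -/
open Equiv Fin

/-- Decomposition of a permutation of `Fin (n+1)`: the image of `last n`, plus the
induced permutation of `Fin n` after removing the last point and its image. -/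
private def permDecompLast (n : ℕ) :
    Fin (n + 1) × Equiv.Perm (Fin n) → Equiv.Perm (Fin (n + 1)) := fun p =>
  (finSuccEquiv' (Fin.last n)).trans ((Equiv.optionCongr p.2).trans (finSuccEquiv' p.1).symm)

private lemma permDecompLast_last (n : ℕ) (p : Fin (n + 1) × Equiv.Perm (Fin n)) :
    permDecompLast n p (Fin.last n) = p.1 := by
  simp [permDecompLast, finSuccEquiv'_at, finSuccEquiv'_symm_none]

private lemma permDecompLast_castSucc (n : ℕ) (p : Fin (n + 1) × Equiv.Perm (Fin n))
    (i : Fin n) : permDecompLast n p i.castSucc = p.1.succAbove (p.2 i) := by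
  simp only [permDecompLast, Equiv.trans_apply]
  rw [← Fin.succAbove_last_apply, finSuccEquiv'_succAbove]
  simp [finSuccEquiv'_symm_some]

private lemma permDecompLast_injective (n : ℕ) : Function.Injective (permDecompLast n) := by
  rintro ⟨c, e⟩ ⟨c', e'⟩ h
  have hc : c = c' := by
    have := congrArg (fun σ : Equiv.Perm (Fin (n + 1)) => σ (Fin.last n)) h
    simpa [permDecompLast_last] using this
  subst hc
  have he : e = e' := by
    ext i
    have := congrArg (fun σ : Equiv.Perm (Fin (n + 1)) => σ i.castSucc) h
    simp only [permDecompLast_castSucc] at this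
    exact Fin.val_eq_of_eq (c.succAbove_right_injective this)
  rw [he]

private noncomputable def permDecompLastEquiv (n : ℕ) :
    Fin (n + 1) × Equiv.Perm (Fin n) ≃ Equiv.Perm (Fin (n + 1)) :=
  Equiv.ofBijective _ ((Fintype.bijective_iff_injective_and_card _).mpr
    ⟨permDecompLast_injective n, by simp [Fintype.card_perm, Nat.factorial_succ]⟩)

private lemma succAbove_val_lt_iff {m : ℕ} (c : Fin (m + 1)) (x : Fin m) {t : ℕ}
    (hc : (c : ℕ) < t) :
    ((c.succAbove x : Fin (m + 1)) : ℕ) < t ↔ (x : ℕ) < t - 1 := by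
  rcases lt_or_ge x.castSucc c with h | h
  · rw [Fin.succAbove_of_castSucc_lt _ _ h]
    have h' := (Fin.lt_def).mp h
    simp only [Fin.coe_castSucc] at h' ⊢
    omega
  · rw [Fin.succAbove_of_le_castSucc _ _ h]
    have h' := (Fin.le_def).mp h
    simp only [Fin.coe_castSucc, Fin.val_succ] at h' ⊢
    omega

private lemma forall_castSucc_last {n : ℕ} {Q : Fin (n + 1) → Prop} :
    (∀ i, Q i) ↔ Q (Fin.last n) ∧ ∀ j : Fin n, Q j.castSucc :=
  ⟨fun h => ⟨h _, fun j => h _⟩, fun h i => Fin.lastCases h.1 h.2 i⟩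

private def finLtEquiv {m k : ℕ} (h : k ≤ m) : {c : Fin m // (c : ℕ) < k} ≃ Fin k where
  toFun c := ⟨c.1, c.2⟩
  invFun j := ⟨⟨j.1, lt_of_lt_of_le j.2 h⟩, j.2⟩
  left_inv c := rfl
  right_inv j := rfl

/-- Brualdi–Ryser formula: if the bi-adjacency matrix of a bipartite graph is a
Ferrers matrix (row `i` consists of `r i` ones followed by zeros) with row sums
ordered `r 1 ≥ r 2 ≥ … ≥ r n`, then the number of perfect matchings (permutations
`σ` with `B i (σ i) = 1`, i.e. `σ i < r i` in 0-indexing) equals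
`∏_{i=1}^{n} (r_{n+1-i} − (i−1))`. -/
theorem ferrers_perfect_matching_count (n : ℕ) (r : Fin n → ℕ)
    (hr : Antitone r) (hle : ∀ i, r i ≤ n) :
    Fintype.card {σ : Equiv.Perm (Fin n) // ∀ i, (σ i : ℕ) < r i} =
      ∏ i : Fin n, (r i.rev - (i : ℕ)) := by
  induction n with
  | zero =>
    rw [Fintype.card_eq_one_iff.mpr ⟨⟨(1 : Equiv.Perm (Fin 0)), fun i => i.elim0⟩,
      fun σ => Subtype.ext (Equiv.ext fun i => i.elim0)⟩]
    simp
  | succ n ih =>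
    set r' : Fin n → ℕ := fun j => r j.castSucc - 1 with hr'def
    have hr'anti : Antitone r' := fun a b hab =>
      Nat.sub_le_sub_right (hr (Fin.castSucc_le_castSucc_iff.mpr hab)) 1
    have hr'le : ∀ j, r' j ≤ n := fun j => by
      have := hle j.castSucc; simp only [hr'def]; omega
    have key : ∀ p : Fin (n + 1) × Equiv.Perm (Fin n),
        ((p.1 : ℕ) < r (Fin.last n) ∧ ∀ j, (p.2 j : ℕ) < r' j) ↔
          (∀ i, ((permDecompLastEquiv n p) i : ℕ) < r i) := by
      rintro ⟨c, e⟩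
      have happ : ∀ i, permDecompLastEquiv n (c, e) i = permDecompLast n (c, e) i :=
        fun i => rfl
      rw [forall_castSucc_last]
      simp only [happ, permDecompLast_last, permDecompLast_castSucc]
      constructor
      · rintro ⟨h1, h2⟩
        refine ⟨h1, fun j => ?_⟩
        have hcr : (c : ℕ) < r j.castSucc := lt_of_lt_of_le h1 (hr (Fin.le_last _))
        exact (succAbove_val_lt_iff c (e j) hcr).mpr (h2 j)
      · rintro ⟨h1, h2⟩
        refine ⟨h1, fun j => ?_⟩
        have hcr : (c : ℕ) < r j.castSucc := lt_of_lt_of_le h1 (hr (Fin.le_last _))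
        exact (succAbove_val_lt_iff c (e j) hcr).mp (h2 j)
    calc Fintype.card {σ : Equiv.Perm (Fin (n + 1)) // ∀ i, (σ i : ℕ) < r i}
        = Fintype.card {p : Fin (n + 1) × Equiv.Perm (Fin n) //
            (p.1 : ℕ) < r (Fin.last n) ∧ ∀ j, (p.2 j : ℕ) < r' j} :=
          (Fintype.card_congr ((permDecompLastEquiv n).subtypeEquiv key)).symm
      _ = Fintype.card {c : Fin (n + 1) // (c : ℕ) < r (Fin.last n)} *
            Fintype.card {e : Equiv.Perm (Fin n) // ∀ j, (e j : ℕ) < r' j} := by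
          rw [← Fintype.card_prod]
          exact Fintype.card_congr (Equiv.subtypeProdEquivProd
            (p := fun c : Fin (n + 1) => (c : ℕ) < r (Fin.last n))
            (q := fun e : Equiv.Perm (Fin n) => ∀ j, (e j : ℕ) < r' j))
      _ = r (Fin.last n) * ∏ j : Fin n, (r' j.rev - (j : ℕ)) := by
          rw [ih r' hr'anti hr'le, Fintype.card_congr (finLtEquiv (hle (Fin.last n))),
            Fintype.card_fin]
      _ = ∏ i : Fin (n + 1), (r i.rev - (i : ℕ)) := by
          rw [Fin.prod_univ_succ]
          have hrv : (0 : Fin (n + 1)).rev = Fin.last n := by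
            ext
            simp only [Fin.val_rev, Fin.val_zero, Fin.val_last]
            omega
          have h0 : r ((0 : Fin (n + 1)).rev) - ((0 : Fin (n + 1)) : ℕ) = r (Fin.last n) := by
            rw [hrv]; simp
          rw [h0]
          congr 1
          refine Finset.prod_congr rfl fun i _ => ?_
          have hrev : (Fin.succ i).rev = (i.rev).castSucc := by
            ext
            simp only [Fin.val_rev, Fin.val_succ, Fin.coe_castSucc]
            omega
          rw [hrev, Fin.val_succ]
          simp only [hr'def]
          omega
end

section
/- For the odd triangle threshold graph G with n×n bi-adjacency matrix A where A_{ij} = 1 iff j ≤ n − i + 1 (n ≥ 2), the number of near-perfect matchings leaving exactly the vertices u_n (last row) and v_n (last column) unmatched equals 2^{n−2}. -/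
open Equiv Fin

namespace TriangleCount

/-- Extend a permutation of `Fin k` to `Fin (k+1)` fixing the last element. -/
def ext1 {k : ℕ} (τ : Perm (Fin k)) : Perm (Fin (k + 1)) :=
  (Equiv.permCongr finSuccEquivLast).symm τ.optionCongr

@[simp] lemma ext1_castSucc {k : ℕ} (τ : Perm (Fin k)) (i : Fin k) :
    ext1 τ (castSucc i) = castSucc (τ i) := by
  simp [ext1, Equiv.permCongr_apply]

@[simp] lemma ext1_last {k : ℕ} (τ : Perm (Fin k)) :
    ext1 τ (last k) = last k := by
  simp [ext1, Equiv.permCongr_apply]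

lemma ext1_injective {k : ℕ} : Function.Injective (ext1 (k := k)) := by
  intro a b h
  exact Equiv.optionCongr_injective ((Equiv.permCongr finSuccEquivLast).symm.injective h)

lemma optionCongr_removeNone {α : Type*} (g : Perm (Option α)) (hg : g none = none) :
    Equiv.optionCongr (Equiv.removeNone g) = g := by
  apply Equiv.ext
  intro x
  cases x with
  | none => simp [hg]
  | some a =>
      have h : ∃ x', g (some a) = some x' := by
        cases h' : g (some a) with
        | none => exact absurd (g.injective (h'.trans hg.symm)) (by simp)
        | some b => exact ⟨b, rfl⟩
      rw [Equiv.optionCongr_apply, Option.map_some]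
      exact Equiv.removeNone_some g h

lemma exists_ext1 {k : ℕ} (f : Perm (Fin (k + 1))) (h : f (last k) = last k) :
    ∃ τ : Perm (Fin k), f = ext1 τ := by
  set g := Equiv.permCongr finSuccEquivLast f with hgdef
  have hg : g none = none := by
    simp [hgdef, Equiv.permCongr_apply, h]
  refine ⟨Equiv.removeNone g, ?_⟩
  have h2 : Equiv.optionCongr (Equiv.removeNone g) = g := optionCongr_removeNone g hg
  rw [ext1, h2, hgdef]
  exact (Equiv.symm_apply_apply _ _).symm


def Phi (k : ℕ) (b : Bool) (τ : Perm (Fin (k + 1))) : Perm (Fin (k + 2)) :=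
  finRotate (k + 2) * (bif b then Equiv.swap 0 (last (k + 1)) else 1) * ext1 τ

lemma val_rot_castSucc {k : ℕ} (x : Fin (k + 1)) :
    ((finRotate (k + 2)) (castSucc x) : ℕ) = (x : ℕ) + 1 := by
  rw [finRotate_succ_apply, Fin.val_add_one_of_lt (castSucc_lt_last x)]
  simp

lemma Phi_last_false {k : ℕ} (τ : Perm (Fin (k + 1))) :
    Phi k false τ (last (k + 1)) = 0 := by
  simp [Phi, Equiv.Perm.mul_apply, finRotate_last, Bool.cond_false]

lemma Phi_last_true {k : ℕ} (τ : Perm (Fin (k + 1))) :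
    Phi k true τ (last (k + 1)) = 1 := by
  simp [Phi, Equiv.Perm.mul_apply, Bool.cond_true, Equiv.swap_apply_right,
    finRotate_succ_apply, zero_add]

lemma Phi_false_castSucc {k : ℕ} (τ : Perm (Fin (k + 1))) (i : Fin (k + 1)) :
    ((Phi k false τ (castSucc i) : ℕ)) = (τ i : ℕ) + 1 := by
  simp only [Phi, Equiv.Perm.mul_apply, ext1_castSucc, Bool.cond_false,
    Equiv.Perm.one_apply]
  exact val_rot_castSucc _

lemma Phi_true_castSucc_of_ne {k : ℕ} (τ : Perm (Fin (k + 1))) (i : Fin (k + 1))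
    (h : τ i ≠ 0) : ((Phi k true τ (castSucc i) : ℕ)) = (τ i : ℕ) + 1 := by
  simp only [Phi, Equiv.Perm.mul_apply, ext1_castSucc, Bool.cond_true]
  rw [Equiv.swap_apply_of_ne_of_ne (by simpa using h) (Fin.ne_of_lt (castSucc_lt_last _))]
  exact val_rot_castSucc _

lemma Phi_true_castSucc_of_eq {k : ℕ} (τ : Perm (Fin (k + 1))) (i : Fin (k + 1))
    (h : τ i = 0) : ((Phi k true τ (castSucc i) : ℕ)) = 0 := by
  simp only [Phi, Equiv.Perm.mul_apply, ext1_castSucc, Bool.cond_true, h]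
  rw [show castSucc (0 : Fin (k+1)) = 0 from rfl, Equiv.swap_apply_left, finRotate_last]
  rfl

lemma Phi_mem {k : ℕ} (b : Bool) (τ : Perm (Fin (k + 1)))
    (hτ : ∀ i : Fin (k + 1), (i : ℕ) + (τ i : ℕ) ≤ k + 1) :
    ∀ i : Fin (k + 2), (i : ℕ) + (Phi k b τ i : ℕ) ≤ k + 2 := by
  intro i
  induction i using Fin.lastCases with
  | last =>
      cases b with
      | false =>
          rw [Phi_last_false]
          simp only [Fin.val_last, Fin.val_zero]
          omega
      | true =>
          rw [Phi_last_true]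
          simp only [Fin.val_last, Fin.val_one]
          omega
  | cast j =>
      have hj : (castSucc j : ℕ) = (j : ℕ) := rfl
      cases b with
      | false =>
          rw [Phi_false_castSucc, hj]
          have := hτ j; omega
      | true =>
          by_cases h : τ j = 0
          · rw [Phi_true_castSucc_of_eq τ j h, hj]
            have := j.is_le; omega
          · rw [Phi_true_castSucc_of_ne τ j h, hj]
            have := hτ j; omega

lemma Phi_injective {k : ℕ} : Function.Injective
    (fun p : Bool × Perm (Fin (k + 1)) => Phi k p.1 p.2) := by
  rintro ⟨b, τ⟩ ⟨b', τ'⟩ h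
  simp only at h
  have hb : b = b' := by
    have h1 := congrArg (fun σ : Perm (Fin (k+2)) => σ (last (k+1))) h
    cases b <;> cases b' <;>
        simp only [Phi_last_true, Phi_last_false] at h1 <;>
      first
        | rfl
        | exact absurd (congrArg Fin.val h1) (by simp)
  subst hb
  have : ext1 τ = ext1 τ' := mul_left_cancel h
  have := ext1_injective this
  simp [this]

lemma Phi_surjective {k : ℕ} (σ : Perm (Fin (k + 2)))
    (hσ : ∀ i : Fin (k + 2), (i : ℕ) + (σ i : ℕ) ≤ k + 2) :
    ∃ b τ, (∀ i : Fin (k + 1), (i : ℕ) + (τ i : ℕ) ≤ k + 1) ∧ Phi k b τ = σ := by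
  have hlast : (σ (last (k + 1)) : ℕ) ≤ 1 := by
    have := hσ (last (k + 1)); simp only [Fin.val_last] at this; omega
  have hcases : σ (last (k + 1)) = 0 ∨ σ (last (k + 1)) = 1 := by
    rcases Nat.le_one_iff_eq_zero_or_eq_one.mp hlast with h | h
    · left; exact Fin.ext (by simp [h])
    · right; exact Fin.ext (by simp [h])
  rcases hcases with h0 | h1
  · -- b = false
    set f := (finRotate (k + 2))⁻¹ * σ with hf
    have hfl : f (last (k + 1)) = last (k + 1) := by
      have : finRotate (k + 2) (last (k + 1)) = 0 := finRotate_last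
      rw [hf, Equiv.Perm.mul_apply, h0]
      exact (Equiv.symm_apply_eq _).mpr this.symm
    obtain ⟨τ, hτeq⟩ := exists_ext1 f hfl
    have hσeq : σ = finRotate (k + 2) * ext1 τ := by
      rw [← hτeq, hf]; group
    refine ⟨false, τ, ?_, ?_⟩
    · intro i
      have h2 := hσ (castSucc i)
      have h3 : (σ (castSucc i) : ℕ) = (τ i : ℕ) + 1 := by
        rw [hσeq, Equiv.Perm.mul_apply, ext1_castSucc]
        exact val_rot_castSucc _
      have hj : (castSucc i : ℕ) = (i : ℕ) := rfl
      rw [h3, hj] at h2; omega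
    · rw [hσeq, Phi]
      simp [Bool.cond_false]
  · -- b = true
    set f := (Equiv.swap 0 (last (k + 1)))⁻¹ * ((finRotate (k + 2))⁻¹ * σ) with hf
    have hfl : f (last (k + 1)) = last (k + 1) := by
      have hr : finRotate (k + 2) 0 = 1 := by
        rw [finRotate_succ_apply, zero_add]
      rw [hf, Equiv.Perm.mul_apply, Equiv.Perm.mul_apply, h1]
      have : (finRotate (k + 2))⁻¹ (1 : Fin (k+2)) = 0 := (Equiv.symm_apply_eq _).mpr hr.symm
      rw [this]
      rw [Equiv.swap_inv, Equiv.swap_apply_left]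
    obtain ⟨τ, hτeq⟩ := exists_ext1 f hfl
    have hσeq : σ = finRotate (k + 2) * (Equiv.swap 0 (last (k + 1))) * ext1 τ := by
      rw [← hτeq, hf]; group
    have key : Phi k true τ = σ := by
      rw [Phi, Bool.cond_true, hσeq]
    refine ⟨true, τ, ?_, key⟩
    intro i
    have h2 := hσ (castSucc i)
    have hj : (castSucc i : ℕ) = (i : ℕ) := rfl
    by_cases h : τ i = 0
    · have h5 : (τ i : ℕ) = 0 := by simp [h]
      have := i.is_le; omega
    · have h3 : (σ (castSucc i) : ℕ) = (τ i : ℕ) + 1 := by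
        rw [← key]; exact Phi_true_castSucc_of_ne τ i h
      rw [h3, hj] at h2; omega

lemma step (k : ℕ) :
    Fintype.card {σ : Perm (Fin (k + 2)) // ∀ i : Fin (k + 2), (i : ℕ) + (σ i : ℕ) ≤ k + 2}
      = 2 * Fintype.card
          {σ : Perm (Fin (k + 1)) // ∀ i : Fin (k + 1), (i : ℕ) + (σ i : ℕ) ≤ k + 1} := by
  have hbij : Function.Bijective
      (fun p : Bool × {σ : Perm (Fin (k + 1)) // ∀ i : Fin (k + 1), (i : ℕ) + (σ i : ℕ) ≤ k + 1}
        => (⟨Phi k p.1 p.2.1, Phi_mem p.1 p.2.1 p.2.2⟩ :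
            {σ : Perm (Fin (k + 2)) // ∀ i : Fin (k + 2), (i : ℕ) + (σ i : ℕ) ≤ k + 2})) := by
    constructor
    · rintro ⟨b, τ, hτ⟩ ⟨b', τ', hτ'⟩ h
      have h2 : Phi k b τ = Phi k b' τ' := congrArg Subtype.val h
      have := Phi_injective (a₁ := (b, τ)) (a₂ := (b', τ')) h2
      simp only [Prod.mk.injEq] at this
      ext <;> simp [this.1, this.2]
    · rintro ⟨σ, hσ⟩
      obtain ⟨b, τ, hτ, heq⟩ := Phi_surjective σ hσ
      exact ⟨⟨b, τ, hτ⟩, Subtype.ext heq⟩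
  rw [← Fintype.card_of_bijective hbij, Fintype.card_prod, Fintype.card_bool]

lemma card_P (k : ℕ) :
    Fintype.card {σ : Perm (Fin (k + 1)) // ∀ i : Fin (k + 1), (i : ℕ) + (σ i : ℕ) ≤ k + 1}
      = 2 ^ k := by
  induction k with
  | zero =>
      rw [pow_zero, Fintype.card_eq_one_iff]
      refine ⟨⟨1, fun i => by
        have h1 := i.is_le
        have h2 := ((1 : Perm (Fin 1)) i).is_le
        omega⟩, ?_⟩
      rintro ⟨y, hy⟩
      apply Subtype.ext
      apply Equiv.ext
      intro i
      apply Fin.ext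
      have h3 := (y i).is_le
      have h4 := ((1 : Perm (Fin (0+1))) i).is_le
      omega
  | succ k ih =>
      rw [step k, ih, pow_succ]
      ring

end TriangleCount


/-- For the odd triangle threshold graph with n×n bi-adjacency matrix `A`,
`A i j = 1` iff `j ≤ n − i + 1` (1-indexed), the number of near-perfect matchings
leaving exactly `u_n` and `v_n` unmatched equals `2^(n−2)`.  This is the permanent
of the (n−1)×(n−1) submatrix obtained by deleting the last row and column, whose
entries (0-indexed over `Fin (n-1)`) are 1 iff `i + j ≤ n - 1`. -/
theorem triangle_near_perfect_count (n : ℕ) (hn : 2 ≤ n) :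
    Fintype.card
        {σ : Equiv.Perm (Fin (n - 1)) // ∀ i : Fin (n - 1), (i : ℕ) + (σ i : ℕ) ≤ n - 1} =
      2 ^ (n - 2) := by
  obtain ⟨k, rfl⟩ : ∃ k, n = k + 2 := ⟨n - 2, by omega⟩
  exact TriangleCount.card_P k
end

section
/- In the odd triangle threshold graph with n×n Ferrers bi-adjacency matrix A (A_{ij} = 1 iff j ≤ n−i+1), for the middle index n' = ⌈n/2⌉, the number of near-perfect matchings leaving u_{n'} and v_i unmatched is 0 for i < n' and at most 2^{n'−2} for every i. -/
/-! Auxiliary definitions and lemmas -/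

lemma val_succAbove' {N : ℕ} (a : Fin (N+1)) (j : Fin N) :
    (a.succAbove j : ℕ) = if (j : ℕ) < (a : ℕ) then (j : ℕ) else (j : ℕ) + 1 := by
  by_cases h : (j : ℕ) < (a : ℕ)
  · rw [if_pos h, Fin.succAbove_of_castSucc_lt _ _ (by simp [Fin.lt_def, h])]
    simp
  · rw [if_neg h, Fin.succAbove_of_le_castSucc _ _ (by simp [Fin.le_def]; omega)]
    simp

def triCapD (N av k : ℕ) : ℕ := if k < N - av then k else k + 1

def triCap (N av bv k : ℕ) : ℕ :=
  if bv ≤ triCapD N av k then triCapD N av k else triCapD N av k + 1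

/-- Key counting lemma: the number of permutations of `Fin N` with nested
initial-segment constraints `σ i < c i` (with `c` monotone) is at most
`∏ i, (c i - i)`. -/
lemma perm_card_le : ∀ (N : ℕ) (c : Fin N → ℕ), Monotone c →
    Fintype.card {σ : Equiv.Perm (Fin N) // ∀ i, (σ i : ℕ) < c i} ≤ ∏ i, (c i - (i : ℕ)) := by
  intro N
  induction N with
  | zero =>
    intro c _
    calc Fintype.card {σ : Equiv.Perm (Fin 0) // ∀ i, (σ i : ℕ) < c i}
        ≤ Fintype.card (Equiv.Perm (Fin 0)) := Fintype.card_subtype_le _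
      _ = 1 := by simp
      _ = ∏ i : Fin 0, (c i - (i : ℕ)) := by simp
  | succ N ih =>
    intro c hc
    have key : Fintype.card {σ : Equiv.Perm (Fin (N+1)) // ∀ i, (σ i : ℕ) < c i}
        = ∑ p : Fin (N+1), Fintype.card {e : Equiv.Perm (Fin N) //
            ∀ i, ((Equiv.Perm.decomposeFin.symm (p, e)) i : ℕ) < c i} := by
      rw [← Fintype.card_sigma]
      exact Fintype.card_congr
        ((Equiv.subtypeEquiv Equiv.Perm.decomposeFin (fun σ => by
            rw [show Equiv.Perm.decomposeFin.symm (Equiv.Perm.decomposeFin σ) = σ from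
              Equiv.symm_apply_apply _ _])).trans
          (Equiv.subtypeProdEquivSigmaSubtype
            (fun (p : Fin (N+1)) (e : Equiv.Perm (Fin N)) =>
              ∀ i, ((Equiv.Perm.decomposeFin.symm (p, e)) i : ℕ) < c i)))
    have hC0 : ∀ i : Fin N, c 0 ≤ c i.succ := fun i => hc (Fin.zero_le _)
    have hsummand : ∀ p : Fin (N+1),
        Fintype.card {e : Equiv.Perm (Fin N) //
            ∀ i, ((Equiv.Perm.decomposeFin.symm (p, e)) i : ℕ) < c i}
        ≤ if (p : ℕ) < c 0 then ∏ i : Fin N, (c i.succ - 1 - (i : ℕ)) else 0 := by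
      intro p
      by_cases hp : (p : ℕ) < c 0
      · rw [if_pos hp]
        have hiff : ∀ e : Equiv.Perm (Fin N),
            (∀ i, ((Equiv.Perm.decomposeFin.symm (p, e)) i : ℕ) < c i) ↔
            (∀ i : Fin N, ((e i : ℕ)) < c i.succ - 1) := by
          intro e
          rw [Fin.forall_fin_succ]
          constructor
          · rintro ⟨-, h⟩ i
            have hi := h i
            rw [Equiv.Perm.decomposeFin_symm_apply_succ] at hi
            by_cases he : (e i).succ = p
            · have h1 : ((e i : ℕ)) + 1 = (p : ℕ) := by
                rw [← he]; simp
              have h2 := hC0 i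
              omega
            · rw [Equiv.swap_apply_of_ne_of_ne (Fin.succ_ne_zero _) he] at hi
              simp only [Fin.val_succ] at hi
              omega
          · intro h
            refine ⟨by rwa [Equiv.Perm.decomposeFin_symm_apply_zero], fun i => ?_⟩
            rw [Equiv.Perm.decomposeFin_symm_apply_succ]
            by_cases he : (e i).succ = p
            · rw [he, Equiv.swap_apply_right]
              have h2 := hC0 i
              simp only [Fin.val_zero]
              omega
            · rw [Equiv.swap_apply_of_ne_of_ne (Fin.succ_ne_zero _) he]
              have h1 := h i
              have h2 := hC0 i
              simp only [Fin.val_succ]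
              omega
        calc Fintype.card {e : Equiv.Perm (Fin N) //
                ∀ i, ((Equiv.Perm.decomposeFin.symm (p, e)) i : ℕ) < c i}
            = Fintype.card {e : Equiv.Perm (Fin N) // ∀ i, ((e i : ℕ)) < c i.succ - 1} :=
              Fintype.card_congr (Equiv.subtypeEquivRight hiff)
          _ ≤ ∏ i : Fin N, (c i.succ - 1 - (i : ℕ)) := by
              apply ih
              intro i j hij
              exact Nat.sub_le_sub_right (hc (Fin.succ_le_succ_iff.mpr hij)) 1
      · rw [if_neg hp, Nat.le_zero, Fintype.card_eq_zero_iff]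
        constructor
        rintro ⟨e, he⟩
        have := he 0
        rw [Equiv.Perm.decomposeFin_symm_apply_zero] at this
        exact hp this
    rw [key]
    calc (∑ p : Fin (N+1), Fintype.card {e : Equiv.Perm (Fin N) //
            ∀ i, ((Equiv.Perm.decomposeFin.symm (p, e)) i : ℕ) < c i})
        ≤ ∑ p : Fin (N+1),
            (if (p : ℕ) < c 0 then ∏ i : Fin N, (c i.succ - 1 - (i : ℕ)) else 0) :=
          Finset.sum_le_sum (fun p _ => hsummand p)
      _ = (Finset.univ.filter (fun p : Fin (N+1) => (p : ℕ) < c 0)).card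
            * ∏ i : Fin N, (c i.succ - 1 - (i : ℕ)) := by
          rw [Finset.sum_ite, Finset.sum_const, Finset.sum_const_zero, add_zero, smul_eq_mul]
      _ ≤ c 0 * ∏ i : Fin N, (c i.succ - 1 - (i : ℕ)) := by
          apply Nat.mul_le_mul_right
          calc (Finset.univ.filter (fun p : Fin (N+1) => (p : ℕ) < c 0)).card
              ≤ (Finset.range (c 0)).card := by
                refine Finset.card_le_card_of_injOn (fun p => (p : ℕ)) ?_ ?_
                · intro p hp
                  simp only [Finset.mem_coe, Finset.mem_filter] at hp
                  exact Finset.mem_range.mpr hp.2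
                · intro x _ y _ h
                  exact Fin.val_injective h
            _ = c 0 := Finset.card_range _
      _ = ∏ i : Fin (N+1), (c i - (i : ℕ)) := by
          rw [Fin.prod_univ_succ]
          simp only [Fin.val_zero, Nat.sub_zero, Fin.val_succ]
          congr 1
          apply Finset.prod_congr rfl
          intro i _
          omega

/-- The number of near-perfect matchings of the triangle threshold graph
(bipartite, edge `{u_i, v_j}` iff `i + j ≤ n - 1` in 0-indexing) leaving exactly
`u_a` and `v_b` unmatched: perfect matchings between the remaining rows and
columns respecting the edge relation. -/
noncomputable def triNearCount (n : ℕ) (a b : Fin n) : ℕ :=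
  Fintype.card
    {e : {i : Fin n // i ≠ a} ≃ {j : Fin n // j ≠ b} //
      ∀ i : {i : Fin n // i ≠ a}, (i.1 : ℕ) + ((e i).1 : ℕ) ≤ n - 1}

/-- Transfer lemma: the near-perfect matching count is bounded by the product of
(truncated) capacity slacks. -/
lemma triNearCount_le_prod {N : ℕ} (a b : Fin (N+1)) :
    triNearCount (N+1) a b ≤ ∏ k : Fin N, (triCap N (a:ℕ) (b:ℕ) (k:ℕ) - (k:ℕ)) := by
  have hpoint : ∀ (k j : Fin N),
      ((a.succAbove k.rev : ℕ) + (b.succAbove j : ℕ) ≤ N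
        ↔ (j : ℕ) < triCap N (a:ℕ) (b:ℕ) (k:ℕ)) := by
    intro k j
    have h1 := k.isLt; have h2 := j.isLt
    have h3 := a.isLt; have h4 := b.isLt
    rw [val_succAbove', val_succAbove', Fin.val_rev]
    unfold triCap triCapD
    split_ifs <;> omega
  have hcard : triNearCount (N+1) a b
      = Fintype.card {σ : Equiv.Perm (Fin N) //
          ∀ k, (σ k : ℕ) < triCap N (a:ℕ) (b:ℕ) (k:ℕ)} := by
    unfold triNearCount
    apply Fintype.card_congr
    refine (Equiv.subtypeEquiv
      (Equiv.equivCongr (Fin.revPerm.trans (finSuccAboveEquiv a)) (finSuccAboveEquiv b)) ?_).symm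
    intro σ
    have hFapp : ∀ k : Fin N,
        (Equiv.equivCongr (Fin.revPerm.trans (finSuccAboveEquiv a)) (finSuccAboveEquiv b) σ)
          ((Fin.revPerm.trans (finSuccAboveEquiv a)) k) = finSuccAboveEquiv b (σ k) := by
      intro k
      simp [Equiv.equivCongr]
    have hRval : ∀ k : Fin N,
        (((Fin.revPerm.trans (finSuccAboveEquiv a)) k : {i : Fin (N+1) // i ≠ a}) : Fin (N+1))
          = a.succAbove k.rev := by
      intro k
      simp [finSuccAboveEquiv_apply]
    have hCval : ∀ j : Fin N,
        ((finSuccAboveEquiv b j : {j : Fin (N+1) // j ≠ b}) : Fin (N+1)) = b.succAbove j := by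
      intro j
      simp [finSuccAboveEquiv_apply]
    constructor
    · intro h i
      obtain ⟨k, rfl⟩ := (Fin.revPerm.trans (finSuccAboveEquiv a)).surjective i
      rw [hFapp k]
      have := (hpoint k (σ k)).mpr (h k)
      rw [hRval k, hCval (σ k)] at *
      simpa using this
    · intro h k
      have hi := h ((Fin.revPerm.trans (finSuccAboveEquiv a)) k)
      rw [hFapp k] at hi
      rw [hRval k, hCval (σ k)] at hi
      exact (hpoint k (σ k)).mp (by simpa using hi)
  rw [hcard]
  apply perm_card_le
  intro k l hkl
  have hkl' : (k : ℕ) ≤ (l : ℕ) := hkl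
  have h1 := k.isLt; have h2 := l.isLt
  unfold triCap triCapD
  dsimp only
  split_ifs <;> omega

/-- In the odd triangle threshold graph with n×n Ferrers bi-adjacency matrix
(`A i j = 1` iff `j ≤ n−i+1`, 1-indexed), for the middle index `n' = ⌈n/2⌉`
(so `u_{n'}` has 0-index `(n-1)/2`), the number of near-perfect matchings leaving
`u_{n'}` and `v_i` unmatched is 0 for `i < n'` and at most `2^(n'−2)` for every `i`. -/
theorem triangle_middle_near_counts (n : ℕ) (hn : 2 ≤ n) (a : Fin n)
    (ha : (a : ℕ) = (n - 1) / 2) :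
    (∀ b : Fin n, (b : ℕ) < (n - 1) / 2 → triNearCount n a b = 0) ∧
    (∀ b : Fin n, triNearCount n a b ≤ 2 ^ ((n + 1) / 2 - 2)) := by
  obtain ⟨N, rfl⟩ : ∃ N, n = N + 1 := ⟨n - 1, by omega⟩
  have hN : 1 ≤ N := by omega
  have haval : (a : ℕ) = N / 2 := by simpa using ha
  constructor
  · intro b hb
    have hb' : (b : ℕ) < N / 2 := by simpa using hb
    have hle := triNearCount_le_prod a b
    have hzero : ∏ k : Fin N, (triCap N (a:ℕ) (b:ℕ) (k:ℕ) - (k:ℕ)) = 0 := by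
      apply Finset.prod_eq_zero (Finset.mem_univ (⟨(b:ℕ), by omega⟩ : Fin N))
      unfold triCap triCapD
      dsimp only
      split_ifs <;> omega
    omega
  · intro b
    refine le_trans (triNearCount_le_prod a b) ?_
    have hb4 := b.isLt
    calc (∏ k : Fin N, (triCap N (a:ℕ) (b:ℕ) (k:ℕ) - (k:ℕ)))
        = (∏ k ∈ Finset.univ.filter
              (fun k : Fin N => N - (a:ℕ) ≤ (k:ℕ) ∧ (k:ℕ) + 1 < (b:ℕ)),
              (triCap N (a:ℕ) (b:ℕ) (k:ℕ) - (k:ℕ)))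
          * ∏ k ∈ Finset.univ.filter
              (fun k : Fin N => ¬(N - (a:ℕ) ≤ (k:ℕ) ∧ (k:ℕ) + 1 < (b:ℕ))),
              (triCap N (a:ℕ) (b:ℕ) (k:ℕ) - (k:ℕ)) :=
          (Finset.prod_filter_mul_prod_filter_not _ _ _).symm
      _ ≤ 2 ^ (Finset.univ.filter
              (fun k : Fin N => N - (a:ℕ) ≤ (k:ℕ) ∧ (k:ℕ) + 1 < (b:ℕ))).card * 1 := by
          apply Nat.mul_le_mul
          · apply Finset.prod_le_pow_card
            intro k _
            have h1 := k.isLt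
            simp only [triCap, triCapD]
            split_ifs <;> omega
          · apply Finset.prod_le_one
            · intro k _
              exact Nat.zero_le _
            · intro k hk
              simp only [Finset.mem_filter, Finset.mem_univ, true_and, not_and, not_lt] at hk
              have h1 := k.isLt
              simp only [triCap, triCapD]
              split_ifs <;> omega
      _ ≤ 2 ^ ((N + 1 + 1) / 2 - 2) := by
          rw [mul_one]
          apply Nat.pow_le_pow_right (by norm_num)
          have hcard : (Finset.univ.filter
              (fun k : Fin N => N - (a:ℕ) ≤ (k:ℕ) ∧ (k:ℕ) + 1 < (b:ℕ))).card
              ≤ (Finset.range (N / 2 - 1)).card := by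
            refine Finset.card_le_card_of_injOn (fun k => (k:ℕ) - (N - (a:ℕ))) ?_ ?_
            · intro k hk
              simp only [Finset.mem_coe, Finset.mem_filter, Finset.mem_univ, true_and] at hk
              rw [Finset.mem_coe, Finset.mem_range]
              dsimp only
              omega
            · intro x hx y hy hxy
              simp only [Finset.coe_filter, Set.mem_setOf_eq, Finset.mem_univ, true_and] at hx hy
              apply Fin.val_injective
              simp only at hxy
              omega
          rw [Finset.card_range] at hcard
          omega
end

section
/- The hexagon chain graph with k hexagons (2n = 6k + 2 vertices) has exactly one perfect matching. -/
/-- Adjacency generating relation of the hexagon chain graph with `k` hexagons: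
hexagon `i` is the 6-cycle on `(i, 0), …, (i, 5)`; consecutive hexagons are joined
by the single edge `(i,3)–(i+1,0)`; the extra vertex `u = inl 0` is attached to
`(0,0)` and `v = inl 1` is attached to `(k-1, 3)`. -/
def hexRel (k : ℕ) : Sum (Fin 2) (Fin k × Fin 6) → Sum (Fin 2) (Fin k × Fin 6) → Prop
  | Sum.inl a, Sum.inr p =>
      (a = 0 ∧ (p.1 : ℕ) = 0 ∧ (p.2 : ℕ) = 0) ∨
      (a = 1 ∧ (p.1 : ℕ) = k - 1 ∧ (p.2 : ℕ) = 3)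
  | Sum.inr p, Sum.inr q =>
      (p.1 = q.1 ∧ q.2 = p.2 + 1) ∨
      ((p.1 : ℕ) + 1 = (q.1 : ℕ) ∧ (p.2 : ℕ) = 3 ∧ (q.2 : ℕ) = 0)
  | _, _ => False

/-- The hexagon chain graph with `k` hexagons, on `6k + 2` vertices. -/
def hexGraph (k : ℕ) : SimpleGraph (Sum (Fin 2) (Fin k × Fin 6)) :=
  SimpleGraph.fromRel (hexRel k)

/-! ### Auxiliary development -/

@[simp] lemma fin6_val_0 : ((0 : Fin 6) : ℕ) = 0 := rfl
@[simp] lemma fin6_val_1 : ((1 : Fin 6) : ℕ) = 1 := rfl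
@[simp] lemma fin6_val_2 : ((2 : Fin 6) : ℕ) = 2 := rfl
@[simp] lemma fin6_val_3 : ((3 : Fin 6) : ℕ) = 3 := rfl
@[simp] lemma fin6_val_4 : ((4 : Fin 6) : ℕ) = 4 := rfl
@[simp] lemma fin6_val_5 : ((5 : Fin 6) : ℕ) = 5 := rfl
@[simp] lemma fin2_val_0 : ((0 : Fin 2) : ℕ) = 0 := rfl
@[simp] lemma fin2_val_1 : ((1 : Fin 2) : ℕ) = 1 := rfl

/-- The edge relation of the unique perfect matching. -/
def m0 (k : ℕ) : Sum (Fin 2) (Fin k × Fin 6) → Sum (Fin 2) (Fin k × Fin 6) → Prop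
  | Sum.inl a, Sum.inr p =>
      (a = 0 ∧ (p.1 : ℕ) = 0 ∧ (p.2 : ℕ) = 0) ∨
      (a = 1 ∧ (p.1 : ℕ) = k - 1 ∧ (p.2 : ℕ) = 3)
  | Sum.inr p, Sum.inr q =>
      (p.1 = q.1 ∧ (((p.2 : ℕ) = 1 ∧ (q.2 : ℕ) = 2) ∨ ((p.2 : ℕ) = 4 ∧ (q.2 : ℕ) = 5))) ∨
      ((p.1 : ℕ) + 1 = (q.1 : ℕ) ∧ (p.2 : ℕ) = 3 ∧ (q.2 : ℕ) = 0)
  | _, _ => False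

lemma hexAdj {k : ℕ} {x y : Sum (Fin 2) (Fin k × Fin 6)} :
    (hexGraph k).Adj x y ↔ x ≠ y ∧ (hexRel k x y ∨ hexRel k y x) := by
  simp [hexGraph]

lemma m0_hexRel {k : ℕ} {x y : Sum (Fin 2) (Fin k × Fin 6)} (h : m0 k x y) : hexRel k x y := by
  rcases x with a | ⟨i, j⟩ <;> rcases y with b | ⟨i', j'⟩ <;>
    simp [-Fin.val_eq_zero_iff, m0, hexRel, Fin.ext_iff, Fin.val_add] at h ⊢ <;> fin_omega

lemma m0_ne {k : ℕ} {x y : Sum (Fin 2) (Fin k × Fin 6)} (h : m0 k x y) : x ≠ y := by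
  rcases x with a | ⟨i, j⟩ <;> rcases y with b | ⟨i', j'⟩ <;>
    simp [-Fin.val_eq_zero_iff, m0, Prod.ext_iff, Fin.ext_iff] at h ⊢ <;> fin_omega

/-- The unique perfect matching as a subgraph. -/
def M0 (k : ℕ) : (hexGraph k).Subgraph where
  verts := Set.univ
  Adj x y := m0 k x y ∨ m0 k y x
  adj_sub h := hexAdj.mpr <| by
    rcases h with h | h
    · exact ⟨m0_ne h, Or.inl (m0_hexRel h)⟩
    · exact ⟨(m0_ne h).symm, Or.inr (m0_hexRel h)⟩
  edge_vert _ := Set.mem_univ _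
  symm := ⟨fun x y h => Or.symm h⟩

section

variable {k : ℕ}

lemma m0_unique {x y z : Sum (Fin 2) (Fin k × Fin 6)}
    (hy : (M0 k).Adj x y) (hz : (M0 k).Adj x z) : y = z := by
  have hy' : m0 k x y ∨ m0 k y x := hy
  have hz' : m0 k x z ∨ m0 k z x := hz
  clear hy hz
  rcases x with a | ⟨i, j⟩ <;> rcases y with b | ⟨y1, y2⟩ <;> rcases z with c | ⟨z1, z2⟩ <;>
    simp [-Fin.val_eq_zero_iff, m0, Prod.ext_iff, Fin.ext_iff] at hy' hz' ⊢ <;> fin_omega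

lemma M0_isPerfectMatching (hk : 1 ≤ k) : (M0 k).IsPerfectMatching := by
  rw [SimpleGraph.Subgraph.isPerfectMatching_iff]
  intro x
  have key : ∀ w, (M0 k).Adj x w → ∃! w', (M0 k).Adj x w' :=
    fun w h => ⟨w, h, fun y hy => m0_unique hy h⟩
  rcases x with a | ⟨i, j⟩
  · fin_cases a
    · exact key (Sum.inr (⟨0, hk⟩, 0)) (Or.inl (by simp [M0, m0]))
    · exact key (Sum.inr (⟨k - 1, by omega⟩, 3)) (Or.inl (by simp [M0, m0]))
  · fin_cases j
    · rcases Nat.eq_zero_or_pos (i : ℕ) with h0 | h0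
      · exact key (Sum.inl 0) (Or.inr (by simp [M0, m0, Fin.ext_iff]; try fin_omega))
      · exact key (Sum.inr (⟨(i : ℕ) - 1, by omega⟩, 3))
          (Or.inr (by simp [M0, m0, Fin.ext_iff]; try fin_omega))
    · exact key (Sum.inr (i, 2)) (Or.inl (by simp [M0, m0]))
    · exact key (Sum.inr (i, 1)) (Or.inr (by simp [M0, m0]))
    · rcases Nat.lt_or_ge ((i : ℕ) + 1) k with h0 | h0
      · exact key (Sum.inr (⟨(i : ℕ) + 1, h0⟩, 0))
          (Or.inl (by simp [M0, m0, Fin.ext_iff]; try fin_omega))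
      · exact key (Sum.inl 1) (Or.inr (by simp [M0, m0, Fin.ext_iff]; try fin_omega))
    · exact key (Sum.inr (i, 5)) (Or.inl (by simp [M0, m0]))
    · exact key (Sum.inr (i, 4)) (Or.inr (by simp [M0, m0]))

variable {M : (hexGraph k).Subgraph}

lemma pm_unique (hM : M.IsPerfectMatching) {x a b : Sum (Fin 2) (Fin k × Fin 6)}
    (ha : M.Adj x a) (hb : M.Adj x b) : a = b := by
  obtain ⟨w, -, hw⟩ := SimpleGraph.Subgraph.isPerfectMatching_iff.mp hM x
  rw [hw a ha, hw b hb]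

lemma pm_exists (hM : M.IsPerfectMatching) (x : Sum (Fin 2) (Fin k × Fin 6)) :
    ∃ w, M.Adj x w :=
  (SimpleGraph.Subgraph.isPerfectMatching_iff.mp hM x).exists

/-- neighbors of `u = inl 0` -/
lemma nbrU (hk : 1 ≤ k) {w : Sum (Fin 2) (Fin k × Fin 6)}
    (h : (hexGraph k).Adj (Sum.inl 0) w) : w = Sum.inr (⟨0, hk⟩, 0) := by
  rw [hexAdj] at h
  obtain ⟨-, h⟩ := h
  rcases w with b | ⟨q1, q2⟩ <;>
    simp [-Fin.val_eq_zero_iff, hexRel, Prod.ext_iff, Fin.ext_iff, Fin.val_add] at h ⊢ <;> fin_omega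

/-- neighbors of `(i,1)` -/
lemma nbr1 {i : Fin k} {w : Sum (Fin 2) (Fin k × Fin 6)}
    (h : (hexGraph k).Adj (Sum.inr (i, 1)) w) : w = Sum.inr (i, 0) ∨ w = Sum.inr (i, 2) := by
  rw [hexAdj] at h
  obtain ⟨-, h⟩ := h
  rcases w with b | ⟨q1, q2⟩ <;>
    simp [-Fin.val_eq_zero_iff, hexRel, Prod.ext_iff, Fin.ext_iff, Fin.val_add] at h ⊢ <;> fin_omega

/-- neighbors of `(i,5)` -/
lemma nbr5 {i : Fin k} {w : Sum (Fin 2) (Fin k × Fin 6)}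
    (h : (hexGraph k).Adj (Sum.inr (i, 5)) w) : w = Sum.inr (i, 0) ∨ w = Sum.inr (i, 4) := by
  rw [hexAdj] at h
  obtain ⟨-, h⟩ := h
  rcases w with b | ⟨q1, q2⟩ <;>
    simp [-Fin.val_eq_zero_iff, hexRel, Prod.ext_iff, Fin.ext_iff, Fin.val_add] at h ⊢ <;> fin_omega

/-- neighbors of `(i,3)` -/
lemma nbr3 {i : Fin k} {w : Sum (Fin 2) (Fin k × Fin 6)}
    (h : (hexGraph k).Adj (Sum.inr (i, 3)) w) :
    w = Sum.inr (i, 2) ∨ w = Sum.inr (i, 4) ∨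
      (∃ q : Fin k, (q : ℕ) = (i : ℕ) + 1 ∧ w = Sum.inr (q, 0)) ∨
      ((i : ℕ) + 1 = k ∧ w = Sum.inl 1) := by
  rw [hexAdj] at h
  obtain ⟨-, h⟩ := h
  rcases w with b | ⟨q1, q2⟩
  · refine Or.inr (Or.inr (Or.inr ?_))
    simp [-Fin.val_eq_zero_iff, hexRel, Fin.ext_iff] at h ⊢
    fin_omega
  · simp only [hexRel, Fin.ext_iff, Fin.val_add] at h
    simp only [fin6_val_3, fin6_val_0] at h
    by_cases h2 : (q2 : ℕ) = 2
    · exact Or.inl (by simp [Prod.ext_iff, Fin.ext_iff]; fin_omega)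
    · by_cases h4 : (q2 : ℕ) = 4
      · exact Or.inr (Or.inl (by simp [Prod.ext_iff, Fin.ext_iff]; try fin_omega))
      · refine Or.inr (Or.inr (Or.inl ⟨q1, ?_, ?_⟩))
        · fin_omega
        · simp [-Fin.val_eq_zero_iff, Prod.ext_iff, Fin.ext_iff]; fin_omega

/-- The induction step: given the entry edge of hexagon `i`, all other matching
edges touching hexagon `i` are forced. -/
lemma step (hM : M.IsPerfectMatching) (i : Fin k) (e : Sum (Fin 2) (Fin k × Fin 6))
    (he1 : e ≠ Sum.inr (i, 1)) (he5 : e ≠ Sum.inr (i, 5))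
    (he : M.Adj e (Sum.inr (i, 0))) :
    M.Adj (Sum.inr (i, 1)) (Sum.inr (i, 2)) ∧ M.Adj (Sum.inr (i, 4)) (Sum.inr (i, 5)) ∧
    (∀ h : (i : ℕ) + 1 < k, M.Adj (Sum.inr (i, 3)) (Sum.inr (⟨(i : ℕ) + 1, h⟩, 0))) ∧
    ((i : ℕ) + 1 = k → M.Adj (Sum.inr (i, 3)) (Sum.inl 1)) := by
  have h12 : M.Adj (Sum.inr (i, 1)) (Sum.inr (i, 2)) := by
    obtain ⟨w, hw⟩ := pm_exists hM (Sum.inr (i, 1))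
    rcases nbr1 (M.adj_sub hw) with rfl | rfl
    · exact absurd (pm_unique hM he.symm hw.symm) he1
    · exact hw
  have h54 : M.Adj (Sum.inr (i, 5)) (Sum.inr (i, 4)) := by
    obtain ⟨w, hw⟩ := pm_exists hM (Sum.inr (i, 5))
    rcases nbr5 (M.adj_sub hw) with rfl | rfl
    · exact absurd (pm_unique hM he.symm hw.symm) he5
    · exact hw
  obtain ⟨w, hw⟩ := pm_exists hM (Sum.inr (i, 3))
  have hw3 := nbr3 (M.adj_sub hw)
  have hnot2 : w ≠ Sum.inr (i, 2) := by
    rintro rfl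
    have := pm_unique hM hw.symm h12.symm
    simp [Prod.ext_iff, Fin.ext_iff] at this
  have hnot4 : w ≠ Sum.inr (i, 4) := by
    rintro rfl
    have := pm_unique hM hw.symm h54.symm
    simp [Prod.ext_iff, Fin.ext_iff] at this
  rcases hw3 with h | h | ⟨q, hq, rfl⟩ | ⟨hik, rfl⟩
  · exact absurd h hnot2
  · exact absurd h hnot4
  · refine ⟨h12, h54.symm, fun h => ?_, fun h => by fin_omega⟩
    have : (⟨(i : ℕ) + 1, h⟩ : Fin k) = q := Fin.ext (by simp [hq])
    rwa [this]
  · exact ⟨h12, h54.symm, fun h => by omega, fun _ => hw⟩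

/-- All edges of `M0` are forced in any perfect matching. -/
lemma hex_edges (hk : 1 ≤ k) (hM : M.IsPerfectMatching) :
    ∀ (i : ℕ) (hi : i < k),
      M.Adj (Sum.inl 0) (Sum.inr (⟨0, hk⟩, 0)) ∧
      M.Adj (Sum.inr (⟨i, hi⟩, 1)) (Sum.inr (⟨i, hi⟩, 2)) ∧
      M.Adj (Sum.inr (⟨i, hi⟩, 4)) (Sum.inr (⟨i, hi⟩, 5)) ∧
      (∀ h : i + 1 < k, M.Adj (Sum.inr (⟨i, hi⟩, 3)) (Sum.inr (⟨i + 1, h⟩, 0))) ∧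
      (i + 1 = k → M.Adj (Sum.inr (⟨i, hi⟩, 3)) (Sum.inl 1)) := by
  have hu : M.Adj (Sum.inl 0) (Sum.inr (⟨0, hk⟩, 0)) := by
    obtain ⟨w, hw⟩ := pm_exists hM (Sum.inl 0)
    rwa [nbrU hk (M.adj_sub hw)] at hw
  intro i
  induction i with
  | zero =>
    intro hi
    have := step hM ⟨0, hi⟩ (Sum.inl 0) (by simp) (by simp) hu
    exact ⟨hu, this.1, this.2.1, this.2.2.1, this.2.2.2⟩
  | succ j ih =>
    intro hi
    obtain ⟨-, -, -, hj3, -⟩ := ih (by omega)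
    have he := hj3 hi
    have := step hM ⟨j + 1, hi⟩ (Sum.inr (⟨j, by omega⟩, 3))
      (by simp [Prod.ext_iff, Fin.ext_iff]) (by simp [Prod.ext_iff, Fin.ext_iff]) he
    exact ⟨hu, this.1, this.2.1, this.2.2.1, this.2.2.2⟩

/-- `M0` is contained in every perfect matching. -/
lemma M0_le (hk : 1 ≤ k) (hM : M.IsPerfectMatching)
    {x y : Sum (Fin 2) (Fin k × Fin 6)} (h : m0 k x y) : M.Adj x y := by
  rcases x with a | ⟨i, j⟩ <;> rcases y with b | ⟨i', j'⟩ <;> simp [-Fin.val_eq_zero_iff, m0, Fin.ext_iff] at h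
  · -- inl a, inr (i',j')
    rcases h with ⟨h0, h1, h2⟩ | ⟨h0, h1, h2⟩
    · have := (hex_edges hk hM 0 hk).1
      have ha : a = 0 := Fin.ext (by simpa using h0)
      have hx : (⟨0, hk⟩ : Fin k) = i' := Fin.ext (by simp; omega)
      have hy : (0 : Fin 6) = j' := Fin.ext (by simp; omega)
      rwa [hx, hy, ← ha] at this
    · obtain ⟨-, -, -, -, hlast⟩ := hex_edges hk hM (k - 1) (by omega)
      have := hlast (by omega)
      have ha : a = 1 := Fin.ext (by simpa using h0)
      have hx : (⟨k - 1, by omega⟩ : Fin k) = i' := Fin.ext (by simp; omega)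
      have hy : (3 : Fin 6) = j' := Fin.ext (by simp; omega)
      rw [hx, hy] at this
      rw [ha]
      exact this.symm
  · -- inr, inr
    rcases h with ⟨h0, ⟨h1, h2⟩ | ⟨h1, h2⟩⟩ | ⟨h0, h1, h2⟩
    · obtain ⟨-, h, -, -, -⟩ := hex_edges hk hM (i : ℕ) i.isLt
      have hx : (⟨(i : ℕ), i.isLt⟩ : Fin k) = i := Fin.ext rfl
      have hx' : i = i' := Fin.ext (by omega)
      have h1' : (1 : Fin 6) = j := Fin.ext (by simp; omega)
      have h2' : (2 : Fin 6) = j' := Fin.ext (by simp; omega)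
      rw [hx, h1', h2'] at h
      rwa [← hx']
    · obtain ⟨-, -, h, -, -⟩ := hex_edges hk hM (i : ℕ) i.isLt
      have hx : (⟨(i : ℕ), i.isLt⟩ : Fin k) = i := Fin.ext rfl
      have hx' : i = i' := Fin.ext (by omega)
      have h1' : (4 : Fin 6) = j := Fin.ext (by simp; omega)
      have h2' : (5 : Fin 6) = j' := Fin.ext (by simp; omega)
      rw [hx, h1', h2'] at h
      rwa [← hx']
    · obtain ⟨-, -, -, h, -⟩ := hex_edges hk hM (i : ℕ) i.isLt
      have hlt : (i : ℕ) + 1 < k := by have := i'.isLt; omega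
      have := h hlt
      have hx : (⟨(i : ℕ), i.isLt⟩ : Fin k) = i := Fin.ext rfl
      have hx' : (⟨(i : ℕ) + 1, hlt⟩ : Fin k) = i' := Fin.ext (by simp; omega)
      have h1' : (3 : Fin 6) = j := Fin.ext (by simp; omega)
      have h2' : (0 : Fin 6) = j' := Fin.ext (by simp; omega)
      rwa [hx, hx', h1', h2'] at this

lemma pm_eq_M0 (hk : 1 ≤ k) (hM : M.IsPerfectMatching) : M = M0 k := by
  have hle : ∀ {x y}, (M0 k).Adj x y → M.Adj x y := by
    intro x y h
    rcases h with h | h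
    · exact M0_le hk hM h
    · exact (M0_le hk hM h).symm
  refine SimpleGraph.Subgraph.ext ?_ ?_
  · rw [SimpleGraph.Subgraph.isSpanning_iff.mp hM.2]; rfl
  · funext x y
    apply propext
    constructor
    · intro h
      obtain ⟨w, hw, -⟩ := SimpleGraph.Subgraph.isPerfectMatching_iff.mp
        (M0_isPerfectMatching hk) x
      have : y = w := pm_unique hM h (hle hw)
      exact this ▸ hw
    · exact hle

end

/-- The hexagon chain graph with `k` hexagons (2n = 6k + 2 vertices) has exactly
one perfect matching. -/
theorem hexGraph_unique_perfect_matching (k : ℕ) (hk : 1 ≤ k) :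
    Set.ncard {M : (hexGraph k).Subgraph | M.IsPerfectMatching} = 1 := by
  rw [Set.ncard_eq_one]
  exact ⟨M0 k, Set.eq_singleton_iff_unique_mem.mpr
    ⟨M0_isPerfectMatching hk, fun M hM => pm_eq_M0 hk hM⟩⟩
end

section
/- In the hexagon chain graph with k hexagons, the number of near-perfect matchings leaving exactly the two end vertices u and v unmatched equals 2^k. -/
/-- The partner of vertex `j` in the perfect matching of a hexagon selected by `c`. -/
def hexPartner (c : Bool) (j : Fin 6) : Fin 6 :=
  if j.val % 2 = (if c then 1 else 0) then j + 1 else j - 1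

lemma hexPartner_ne : ∀ (c : Bool) (j : Fin 6), hexPartner c j ≠ j := by decide

lemma hexPartner_invol : ∀ (c : Bool) (j : Fin 6), hexPartner c (hexPartner c j) = j := by decide

lemma hexPartner_cases : ∀ (c : Bool) (j : Fin 6),
    hexPartner c j = j + 1 ∨ j = hexPartner c j + 1 := by decide

/-- The matching of the hexagon chain determined by a choice `b` of one of the two
perfect matchings of each hexagon. -/
def hexMatch (k : ℕ) (b : Fin k → Bool) : (hexGraph k).Subgraph where
  verts := {x | x ≠ Sum.inl 0 ∧ x ≠ Sum.inl 1}
  Adj x y := ∃ p : Fin k × Fin 6, x = Sum.inr p ∧ y = Sum.inr (p.1, hexPartner (b p.1) p.2)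
  adj_sub := by
    rintro x y ⟨p, rfl, rfl⟩
    rw [hexGraph, SimpleGraph.fromRel_adj]
    refine ⟨?_, ?_⟩
    · intro h
      exact hexPartner_ne (b p.1) p.2 (Prod.ext_iff.mp (Sum.inr.inj h).symm).2
    · rcases hexPartner_cases (b p.1) p.2 with h | h
      · exact Or.inl (Or.inl ⟨rfl, h⟩)
      · exact Or.inr (Or.inl ⟨rfl, h⟩)
  edge_vert := by
    rintro x y ⟨p, rfl, rfl⟩
    exact ⟨by simp, by simp⟩
  symm := by
    constructor
    rintro x y ⟨p, rfl, rfl⟩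
    exact ⟨(p.1, hexPartner (b p.1) p.2), rfl, by simp [hexPartner_invol]⟩

lemma hexMatch_adj {k : ℕ} {b : Fin k → Bool} {x y} :
    (hexMatch k b).Adj x y ↔
      ∃ p : Fin k × Fin 6, x = Sum.inr p ∧ y = Sum.inr (p.1, hexPartner (b p.1) p.2) :=
  Iff.rfl

lemma fin2_cases (a : Fin 2) (h0 : a ≠ 0) (h1 : a ≠ 1) : False := by
  fin_cases a <;> simp_all

lemma hexMatch_isMatching (k : ℕ) (b : Fin k → Bool) : (hexMatch k b).IsMatching := by
  rintro v hv
  rcases v with a | p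
  · rcases hv with ⟨h0, h1⟩
    exact (fin2_cases a (fun h => h0 (by rw [h])) (fun h => h1 (by rw [h]))).elim
  · refine ⟨Sum.inr (p.1, hexPartner (b p.1) p.2), ⟨p, rfl, rfl⟩, ?_⟩
    rintro y ⟨q, hq, rfl⟩
    cases Sum.inr.inj hq
    rfl

section Surj

variable {k : ℕ} {M : (hexGraph k).Subgraph} (hM : M.IsMatching)
  (hv : M.verts = {x | x ≠ Sum.inl 0 ∧ x ≠ Sum.inl 1})

include hv in
lemma madj_elim {p : Fin k × Fin 6} {z} (h : M.Adj (Sum.inr p) z) :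
    ∃ q : Fin k × Fin 6, z = Sum.inr q ∧
      ((p.1 = q.1 ∧ (q.2 = p.2 + 1 ∨ p.2 = q.2 + 1)) ∨
       ((p.1 : ℕ) + 1 = (q.1 : ℕ) ∧ (p.2 : ℕ) = 3 ∧ (q.2 : ℕ) = 0) ∨
       ((q.1 : ℕ) + 1 = (p.1 : ℕ) ∧ (q.2 : ℕ) = 3 ∧ (p.2 : ℕ) = 0)) := by
  have hz : z ∈ M.verts := M.edge_vert h.symm
  rcases z with a | q
  · rw [hv] at hz
    exact (fin2_cases a (fun h' => hz.1 (by rw [h'])) (fun h' => hz.2 (by rw [h']))).elim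
  · have hadj := M.adj_sub h
    rw [hexGraph, SimpleGraph.fromRel_adj] at hadj
    refine ⟨q, rfl, ?_⟩
    rcases hadj.2 with h' | h'
    · simp only [hexRel] at h'
      rcases h' with ⟨h1, h2⟩ | h' 
      · exact Or.inl ⟨h1, Or.inl h2⟩
      · exact Or.inr (Or.inl h')
    · simp only [hexRel] at h'
      rcases h' with ⟨h1, h2⟩ | h'
      · exact Or.inl ⟨h1.symm, Or.inr h2⟩
      · exact Or.inr (Or.inr h')

include hv in
lemma inr_mem_verts (p : Fin k × Fin 6) : Sum.inr p ∈ M.verts := by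
  rw [hv]; exact ⟨by simp, by simp⟩

include hM in
lemma madj_unique {a y z} (h1 : M.Adj a y) (h2 : M.Adj a z) : y = z :=
  (hM (M.edge_vert h1)).unique h1 h2


lemma inr_eq_mk {k : ℕ} {q : Fin k × Fin 6} {i : Fin k} {j : Fin 6}
    (h1 : (q.1 : ℕ) = (i : ℕ)) (h2 : (q.2 : ℕ) = (j : ℕ)) :
    (Sum.inr q : Sum (Fin 2) (Fin k × Fin 6)) = Sum.inr (i, j) := by
  cases q with
  | mk a b => simp_all [Prod.ext_iff, Fin.ext_iff]

include hv in
lemma madj_elim' {i : Fin k} {j : Fin 6} {z} (h : M.Adj (Sum.inr (i, j)) z) :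
    ∃ q : Fin k × Fin 6, z = Sum.inr q ∧
      (((q.1 : ℕ) = (i : ℕ) ∧ ((q.2 : ℕ) = ((j : ℕ) + 1) % 6 ∨ (j : ℕ) = ((q.2 : ℕ) + 1) % 6)) ∨
       ((q.1 : ℕ) = (i : ℕ) + 1 ∧ (j : ℕ) = 3 ∧ (q.2 : ℕ) = 0) ∨
       ((q.1 : ℕ) + 1 = (i : ℕ) ∧ (q.2 : ℕ) = 3 ∧ (j : ℕ) = 0)) := by
  obtain ⟨q, rfl, hq⟩ := madj_elim hv h
  refine ⟨q, rfl, ?_⟩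
  rcases hq with ⟨h1, h2 | h2⟩ | h' | h'
  · exact Or.inl ⟨congrArg Fin.val h1.symm,
      Or.inl (by rw [show q.2 = j + 1 from h2]; simp [Fin.val_add])⟩
  · exact Or.inl ⟨congrArg Fin.val h1.symm,
      Or.inr (by rw [show j = q.2 + 1 from h2]; simp [Fin.val_add])⟩
  · exact Or.inr (Or.inl ⟨h'.1.symm, h'.2.1, h'.2.2⟩)
  · exact Or.inr (Or.inr ⟨h'.1, h'.2.1, h'.2.2⟩)

include hM hv in
lemma hex_step (i : Fin k)
    (hP : ∀ z, M.Adj (Sum.inr (i, 0)) z → z = Sum.inr (i, 1) ∨ z = Sum.inr (i, 5)) :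
    ∃ c : Bool, ∀ j : Fin 6, M.Adj (Sum.inr (i, j)) (Sum.inr (i, hexPartner c j)) := by
  obtain ⟨w, hw, -⟩ := hM (inr_mem_verts hv (i, 0))
  rcases hP w hw with rfl | rfl
  · -- case A : partner of (i,0) is (i,1)
    obtain ⟨w2, hw2, -⟩ := hM (inr_mem_verts hv (i, 2))
    obtain ⟨q, rfl, hq⟩ := madj_elim' hv hw2
    have hlt := q.2.isLt
    have h1 : (q.1 : ℕ) = (i : ℕ) ∧ ((q.2 : ℕ) = 3 ∨ (q.2 : ℕ) = 1) := by
      simp only [show ((2 : Fin 6) : ℕ) = 2 from rfl] at hq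
      omega
    rcases h1 with ⟨hqi, h3 | h3⟩
    · rw [inr_eq_mk (j := (3 : Fin 6)) hqi h3] at hw2
      obtain ⟨w4, hw4, -⟩ := hM (inr_mem_verts hv (i, 4))
      obtain ⟨r, rfl, hr⟩ := madj_elim' hv hw4
      have hlt4 := r.2.isLt
      have h4 : (r.1 : ℕ) = (i : ℕ) ∧ ((r.2 : ℕ) = 5 ∨ (r.2 : ℕ) = 3) := by
        simp only [show ((4 : Fin 6) : ℕ) = 4 from rfl] at hr
        omega
      rcases h4 with ⟨hri, h5 | h5⟩
      · rw [inr_eq_mk (j := (5 : Fin 6)) hri h5] at hw4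
        refine ⟨false, ?_⟩
        intro j
        fin_cases j
        · exact hw
        · exact hw.symm
        · exact hw2
        · exact hw2.symm
        · exact hw4
        · exact hw4.symm
      · exfalso
        rw [inr_eq_mk (j := (3 : Fin 6)) hri h5] at hw4
        have := madj_unique hM hw4.symm hw2.symm
        simp only [Sum.inr.injEq, Prod.mk.injEq] at this
        exact absurd this.2 (by decide)
    · exfalso
      rw [inr_eq_mk (j := (1 : Fin 6)) hqi h3] at hw2
      have := madj_unique hM hw2.symm hw.symm
      simp only [Sum.inr.injEq, Prod.mk.injEq] at this
      exact absurd this.2 (by decide)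
  · -- case B : partner of (i,0) is (i,5)
    obtain ⟨w4, hw4, -⟩ := hM (inr_mem_verts hv (i, 4))
    obtain ⟨q, rfl, hq⟩ := madj_elim' hv hw4
    have hlt := q.2.isLt
    have h1 : (q.1 : ℕ) = (i : ℕ) ∧ ((q.2 : ℕ) = 5 ∨ (q.2 : ℕ) = 3) := by
      simp only [show ((4 : Fin 6) : ℕ) = 4 from rfl] at hq
      omega
    rcases h1 with ⟨hqi, h3 | h3⟩
    · exfalso
      rw [inr_eq_mk (j := (5 : Fin 6)) hqi h3] at hw4
      have := madj_unique hM hw4.symm hw.symm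
      simp only [Sum.inr.injEq, Prod.mk.injEq] at this
      exact absurd this.2 (by decide)
    · rw [inr_eq_mk (j := (3 : Fin 6)) hqi h3] at hw4
      obtain ⟨w1, hw1, -⟩ := hM (inr_mem_verts hv (i, 1))
      obtain ⟨r, rfl, hr⟩ := madj_elim' hv hw1
      have hlt4 := r.2.isLt
      have h4 : (r.1 : ℕ) = (i : ℕ) ∧ ((r.2 : ℕ) = 2 ∨ (r.2 : ℕ) = 0) := by
        simp only [show ((1 : Fin 6) : ℕ) = 1 from rfl] at hr
        omega
      rcases h4 with ⟨hri, h5 | h5⟩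
      · rw [inr_eq_mk (j := (2 : Fin 6)) hri h5] at hw1
        refine ⟨true, ?_⟩
        intro j
        fin_cases j
        · exact hw
        · exact hw1
        · exact hw1.symm
        · exact hw4.symm
        · exact hw4
        · exact hw.symm
      · exfalso
        rw [inr_eq_mk (j := (0 : Fin 6)) hri h5] at hw1
        have := madj_unique hM hw1.symm hw
        simp only [Sum.inr.injEq, Prod.mk.injEq] at this
        exact absurd this.2 (by decide)

include hv in
lemma P_base (h0 : 0 < k) :
    ∀ z, M.Adj (Sum.inr ((⟨0, h0⟩ : Fin k), 0)) z →
      z = Sum.inr ((⟨0, h0⟩ : Fin k), 1) ∨ z = Sum.inr ((⟨0, h0⟩ : Fin k), 5) := by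
  intro z hz
  obtain ⟨q, rfl, hq⟩ := madj_elim' hv hz
  have hlt := q.2.isLt
  have H : (q.1 : ℕ) = 0 ∧ ((q.2 : ℕ) = 1 ∨ (q.2 : ℕ) = 5) := by
    simp only [show ((0 : Fin 6) : ℕ) = 0 from rfl, show ((⟨0, h0⟩ : Fin k) : ℕ) = 0 from rfl]
      at hq
    omega
  rcases H with ⟨hq1, h | h⟩
  · exact Or.inl (inr_eq_mk (j := (1 : Fin 6)) hq1 h)
  · exact Or.inr (inr_eq_mk (j := (5 : Fin 6)) hq1 h)

include hM hv in
lemma P_step {n : ℕ} (h1 : n + 1 < k) (hn : n < k)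
    (h3 : M.Adj (Sum.inr ((⟨n, hn⟩ : Fin k), 3)) (Sum.inr ((⟨n, hn⟩ : Fin k), 2)) ∨
          M.Adj (Sum.inr ((⟨n, hn⟩ : Fin k), 3)) (Sum.inr ((⟨n, hn⟩ : Fin k), 4))) :
    ∀ z, M.Adj (Sum.inr ((⟨n + 1, h1⟩ : Fin k), 0)) z →
      z = Sum.inr ((⟨n + 1, h1⟩ : Fin k), 1) ∨ z = Sum.inr ((⟨n + 1, h1⟩ : Fin k), 5) := by
  intro z hz
  obtain ⟨q, rfl, hq⟩ := madj_elim' hv hz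
  have hlt := q.2.isLt
  have H : ((q.1 : ℕ) = n + 1 ∧ ((q.2 : ℕ) = 1 ∨ (q.2 : ℕ) = 5)) ∨
      ((q.1 : ℕ) = n ∧ (q.2 : ℕ) = 3) := by
    simp only [show ((0 : Fin 6) : ℕ) = 0 from rfl,
      show ((⟨n + 1, h1⟩ : Fin k) : ℕ) = n + 1 from rfl] at hq
    omega
  rcases H with ⟨hq1, h | h⟩ | ⟨hq1, hq2⟩
  · exact Or.inl (inr_eq_mk (j := (1 : Fin 6)) hq1 h)
  · exact Or.inr (inr_eq_mk (j := (5 : Fin 6)) hq1 h)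
  · exfalso
    rw [inr_eq_mk (i := (⟨n, hn⟩ : Fin k)) (j := (3 : Fin 6)) hq1 hq2] at hz
    rcases h3 with h3 | h3
    · have := madj_unique hM hz.symm h3
      simp only [Sum.inr.injEq, Prod.mk.injEq, Fin.mk.injEq] at this
      omega
    · have := madj_unique hM hz.symm h3
      simp only [Sum.inr.injEq, Prod.mk.injEq, Fin.mk.injEq] at this
      omega

include hM hv in
lemma hex_all : ∀ (n : ℕ) (h : n < k), ∃ c : Bool, ∀ j : Fin 6,
    M.Adj (Sum.inr ((⟨n, h⟩ : Fin k), j)) (Sum.inr ((⟨n, h⟩ : Fin k), hexPartner c j)) := by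
  intro n
  induction n with
  | zero => exact fun h => hex_step hM hv _ (P_base hv h)
  | succ m ih =>
    intro h
    have hm : m < k := by omega
    obtain ⟨c, hc⟩ := ih hm
    have h3 : M.Adj (Sum.inr ((⟨m, hm⟩ : Fin k), 3)) (Sum.inr ((⟨m, hm⟩ : Fin k), 2)) ∨
        M.Adj (Sum.inr ((⟨m, hm⟩ : Fin k), 3)) (Sum.inr ((⟨m, hm⟩ : Fin k), 4)) := by
      have := hc 3
      rcases c with _ | _
      · rw [show hexPartner false 3 = 2 by decide] at this; exact Or.inl this
      · rw [show hexPartner true 3 = 4 by decide] at this; exact Or.inr this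
    exact hex_step hM hv _ (P_step hM hv h hm h3)

include hM hv in
lemma M_eq_hexMatch : ∃ b : Fin k → Bool, M = hexMatch k b := by
  have key : ∀ i : Fin k, ∃ c : Bool, ∀ j : Fin 6,
      M.Adj (Sum.inr (i, j)) (Sum.inr (i, hexPartner c j)) := by
    intro i
    have := hex_all hM hv i.1 i.2
    simpa using this
  choose b hb using key
  refine ⟨b, ?_⟩
  ext x y
  · rw [hv]; rfl
  · constructor
    · intro hxy
      have hx : x ∈ M.verts := M.edge_vert hxy
      rcases x with a | p
      · rw [hv] at hx
        exact (fin2_cases a (fun h' => hx.1 (by rw [h'])) (fun h' => hx.2 (by rw [h']))).elim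
      · have hadj : M.Adj (Sum.inr p) (Sum.inr (p.1, hexPartner (b p.1) p.2)) := hb p.1 p.2
        have := madj_unique hM hxy hadj
        exact ⟨p, rfl, this⟩
    · rintro ⟨p, rfl, rfl⟩
      exact hb p.1 p.2

end Surj

/-- In the hexagon chain graph with `k` hexagons, the number of near-perfect
matchings leaving exactly the two end vertices `u = inl 0` and `v = inl 1`
unmatched equals `2^k`. -/
theorem hexGraph_near_perfect_count (k : ℕ) (hk : 1 ≤ k) :
    Set.ncard {M : (hexGraph k).Subgraph |
      M.IsMatching ∧ M.verts = {x | x ≠ Sum.inl 0 ∧ x ≠ Sum.inl 1}} = 2 ^ k := by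
  have hinj : Function.Injective (hexMatch k) := by
    intro b b' h
    funext i
    have hadj : (hexMatch k b).Adj (Sum.inr (i, 0))
        (Sum.inr (i, hexPartner (b i) 0)) := ⟨(i, 0), rfl, rfl⟩
    rw [h] at hadj
    obtain ⟨q, hq1, hq2⟩ := hadj
    cases Sum.inr.inj hq1
    have h2 : hexPartner (b i) 0 = hexPartner (b' i) 0 :=
      (Prod.ext_iff.mp (Sum.inr.inj hq2)).2
    revert h2
    cases hb : b i <;> cases hb' : b' i <;> decide
  have hset : {M : (hexGraph k).Subgraph |
      M.IsMatching ∧ M.verts = {x | x ≠ Sum.inl 0 ∧ x ≠ Sum.inl 1}} =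
      Set.range (hexMatch k) := by
    ext M
    constructor
    · rintro ⟨hm, hvm⟩
      obtain ⟨b, hb⟩ := M_eq_hexMatch hm hvm
      exact ⟨b, hb.symm⟩
    · rintro ⟨b, rfl⟩
      exact ⟨hexMatch_isMatching k b, rfl⟩
  rw [hset, ← Set.image_univ, Set.ncard_image_of_injective _ hinj, Set.ncard_univ]
  simp [Nat.card_eq_fintype_card]
end
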